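/- Let ε ∈ (0,1), k ≥ 1, let Q ⊆ [n] with |Q| ≤ k, and let c : {0,1}^n → {−1,1} satisfy Inf_i(c) = 0 for every i ∉ Q. Suppose real numbers α_1, …, α_n satisfy |α_i − Inf_i(c)| ≤ ε/(5k) for every i ∈ [n], and define T = {i ∈ [n] : α_i ≥ ε/(4k)}. Then T ⊆ Q and Σ_{i ∈ [n]\T} Inf_i(c) ≤ ε/2. -/

import Mathlib

open Finset

/-- The character `χ_S(x) = (-1)^{S·x}` on the Boolean cube. -/
noncomputable def chi {n : ℕ} (S x : Fin n → ZMod 2) : ℝ :=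
  (-1 : ℝ) ^ (∑ i, S i * x i).val

/-- The Fourier coefficient `f̂(S) = 2^{-n} Σ_x f(x) (-1)^{S·x}`. -/
noncomputable def fhat {n : ℕ} (f : (Fin n → ZMod 2) → ℝ)
    (S : Fin n → ZMod 2) : ℝ :=
  (2 ^ n : ℝ)⁻¹ * ∑ x : Fin n → ZMod 2, f x * chi S x

/-- The `i`-th influence `Inf_i(f) = Σ_{S : S_i = 1} f̂(S)²`. -/
noncomputable def influence {n : ℕ} (i : Fin n) (f : (Fin n → ZMod 2) → ℝ) : ℝ :=
  ∑ S ∈ Finset.univ.filter (fun S : Fin n → ZMod 2 => S i = 1), fhat f S ^ 2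

/-- First phase of the junta-learning algorithm: for a `k`-junta `c` on the
coordinates `Q` (so `Inf_i(c) = 0` for `i ∉ Q`, `|Q| ≤ k`), if `α_i` estimates
`Inf_i(c)` to within `ε/(5k)` for every `i`, then the set
`T = {i : α_i ≥ ε/(4k)}` satisfies `T ⊆ Q` and `Σ_{i ∉ T} Inf_i(c) ≤ ε/2`. -/
theorem stmt10 {n : ℕ} (ε : ℝ) (hε : ε ∈ Set.Ioo (0 : ℝ) 1) (k : ℕ)
    (hk : 1 ≤ k) (Q : Finset (Fin n)) (hQ : Q.card ≤ k)
    (c : (Fin n → ZMod 2) → ℝ) (hc : ∀ x, c x = 1 ∨ c x = -1)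
    (hinf : ∀ i, i ∉ Q → influence i c = 0)
    (α : Fin n → ℝ) (hα : ∀ i, |α i - influence i c| ≤ ε / (5 * k)) :
    (Finset.univ.filter (fun i : Fin n => ε / (4 * k) ≤ α i)) ⊆ Q ∧
    ∑ i ∈ (Finset.univ.filter (fun i : Fin n => ε / (4 * k) ≤ α i))ᶜ,
      influence i c ≤ ε / 2 := by
  obtain ⟨hε0, hε1⟩ := hε
  have hkR : (1 : ℝ) ≤ (k : ℝ) := by exact_mod_cast hk
  have hkpos : (0 : ℝ) < (k : ℝ) := by linarith
  have h45 : ε / (5 * k) < ε / (4 * k) := by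
    apply div_lt_div_of_pos_left hε0 (by linarith) (by linarith)
  have hTQ : (Finset.univ.filter (fun i : Fin n => ε / (4 * k) ≤ α i)) ⊆ Q := by
    intro i hi
    simp only [Finset.mem_filter, Finset.mem_univ, true_and] at hi
    by_contra hiQ
    have h0 := hinf i hiQ
    have := hα i
    rw [h0, sub_zero] at this
    have : α i ≤ ε / (5 * k) := le_trans (le_abs_self _) this
    linarith
  refine ⟨hTQ, ?_⟩
  have hnonneg : ∀ i : Fin n, 0 ≤ influence i c := fun i =>
    Finset.sum_nonneg fun S _ => sq_nonneg _
  set T := Finset.univ.filter (fun i : Fin n => ε / (4 * k) ≤ α i) with hT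
  have hsum : ∑ i ∈ Tᶜ, influence i c = ∑ i ∈ Tᶜ ∩ Q, influence i c := by
    rw [eq_comm]
    apply Finset.sum_subset (Finset.inter_subset_left)
    intro i hi hi'
    have : i ∉ Q := by
      intro hq
      exact hi' (Finset.mem_inter.mpr ⟨hi, hq⟩)
    exact hinf i this
  rw [hsum]
  have hbound : ∀ i ∈ Tᶜ ∩ Q, influence i c ≤ ε / 2 / k := by
    intro i hi
    have hiT : i ∉ T := Finset.mem_compl.mp (Finset.mem_inter.mp hi).1
    have hiα : α i < ε / (4 * k) := by
      by_contra h
      exact hiT (Finset.mem_filter.mpr ⟨Finset.mem_univ i, le_of_not_gt h⟩)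
    have := hα i
    have h2 : influence i c - α i ≤ ε / (5 * k) := by
      have := neg_abs_le (α i - influence i c)
      have habs := hα i
      linarith [abs_le.mp habs |>.1]
    have : influence i c ≤ ε / (4 * k) + ε / (5 * k) := by linarith
    have heq : ε / (4 * k) + ε / (5 * k) ≤ ε / 2 / k := by
      rw [div_add_div _ _ (by positivity) (by positivity), div_le_div_iff₀ (by positivity) (by positivity)]
      ring_nf
      nlinarith [mul_pos hkpos hkpos, sq_nonneg ((k:ℝ))]
    linarith
  calc ∑ i ∈ Tᶜ ∩ Q, influence i c ≤ ∑ _i ∈ Tᶜ ∩ Q, (ε / 2 / k) :=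
        Finset.sum_le_sum hbound
    _ = (Tᶜ ∩ Q).card * (ε / 2 / k) := by rw [Finset.sum_const, nsmul_eq_mul]
    _ ≤ k * (ε / 2 / k) := by
        apply mul_le_mul_of_nonneg_right _ (by positivity)
        exact_mod_cast le_trans (Finset.card_le_card Finset.inter_subset_right) hQ
    _ = ε / 2 := by field_simp
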